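/- Suppose each f^{(𝔭,l)}(x;i) satisfies f^{(𝔭,l)}(x;i) = (px)^{l−(l−2i)_n} f^{(𝔭,l)}(1/(p²x);i), and suppose D(s,m) satisfies the Kubota functional equation D(s,m) = |m|^{1−s} Σ_{i=0}^{n−1} T_{ij}(s) D(2−s, m; i) for deg m ≡ j mod n, where T_{ij}(s) depends only on 2i−j mod n. Then E(s, 𝔭^l) = Σ_j D(s, 𝔭^{(l−2j)_n}) f^{(𝔭,l)}(|𝔭|^{−s}; j) satisfies E(s, 𝔭^l) = |𝔭|^{(1−s)l} Σ_{i=0}^{n−1} T_{i, l·deg𝔭}(s) E(2−s, 𝔭^l; i). -/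
import Mathlib

private lemma shift_sum (n : ℕ) (hn : 0 < n) (g : ℤ → ℂ)
    (hg : ∀ x : ℤ, g x = g (x % (n : ℤ))) (c : ℤ) :
    ∑ i ∈ Finset.range n, g ((i : ℤ) - c) = ∑ i ∈ Finset.range n, g (i : ℤ) := by
  have hn' : (0 : ℤ) < (n : ℤ) := by exact_mod_cast hn
  refine Finset.sum_nbij' (fun i => (((i : ℤ) - c) % (n : ℤ)).toNat)
    (fun i => (((i : ℤ) + c) % (n : ℤ)).toNat) ?_ ?_ ?_ ?_ ?_
  · intro a _
    have h1 : 0 ≤ ((a : ℤ) - c) % (n : ℤ) := Int.emod_nonneg _ hn'.ne'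
    have h2 : ((a : ℤ) - c) % (n : ℤ) < n := Int.emod_lt_of_pos _ hn'
    simp only [Finset.mem_range]; omega
  · intro a _
    have h1 : 0 ≤ ((a : ℤ) + c) % (n : ℤ) := Int.emod_nonneg _ hn'.ne'
    have h2 : ((a : ℤ) + c) % (n : ℤ) < n := Int.emod_lt_of_pos _ hn'
    simp only [Finset.mem_range]; omega
  · intro a ha
    have haa : (a : ℤ) < n := by exact_mod_cast Finset.mem_range.mp ha
    have h1 : 0 ≤ ((a : ℤ) - c) % (n : ℤ) := Int.emod_nonneg _ hn'.ne'
    beta_reduce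
    rw [Int.toNat_of_nonneg h1, Int.emod_add_emod]
    have h3 : (a : ℤ) - c + c = a := by ring
    rw [h3, Int.emod_eq_of_lt (by positivity) haa, Int.toNat_natCast]
  · intro a ha
    have haa : (a : ℤ) < n := by exact_mod_cast Finset.mem_range.mp ha
    have h1 : 0 ≤ ((a : ℤ) + c) % (n : ℤ) := Int.emod_nonneg _ hn'.ne'
    beta_reduce
    rw [Int.toNat_of_nonneg h1]
    have h4 : ((a : ℤ) + c) % (n : ℤ) - c = ((a : ℤ) + c) % (n : ℤ) + (-c) := by ring
    rw [h4, Int.emod_add_emod]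
    have h3 : (a : ℤ) + c + -c = a := by ring
    rw [h3, Int.emod_eq_of_lt (by positivity) haa, Int.toNat_natCast]
  · intro a _
    have h1 : 0 ≤ ((a : ℤ) - c) % (n : ℤ) := Int.emod_nonneg _ hn'.ne'
    beta_reduce
    rw [Int.toNat_of_nonneg h1, ← hg]

/-- Suppose each `f^{(𝔭,l)}(x;i)` satisfies `f^{(𝔭,l)}(x;i) = (px)^{l−(l−2i)_n}
f^{(𝔭,l)}(1/(p²x); i)`, and suppose the Kubota series `D(s,m)` satisfies
`D(s,m) = |m|^{1−s} ∑_{i=0}^{n−1} T_{ij}(s) D(2−s, m; i)` for `deg m ≡ j mod n`, where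
`T_{ij}(s)` depends only on `2i−j mod n`.  Then
`E(s, 𝔭^l) = ∑_j D(s, 𝔭^{(l−2j)_n}) f^{(𝔭,l)}(|𝔭|^{−s}; j)` satisfies
`E(s, 𝔭^l) = |𝔭|^{(1−s)l} ∑_{i=0}^{n−1} T_{i, l·deg 𝔭}(s) E(2−s, 𝔭^l; i)`.
(The decompositions of `E` and of its pieces `E(s,𝔭^l;i)` in terms of `D`, `D(s,m;i)` and
`f^{(𝔭,l)}` from the previous lemma may be assumed.) -/
theorem stmt_16 {F : Type*} [Field F] [Fintype F] (n : ℕ) (hn : 1 ≤ n)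
    (hq : Fintype.card F % (4 * n) = 1)
    (p : Polynomial F) (hp : p.Monic) (hirr : Irreducible p) (l : ℕ)
    (P : ℂ) (hP : P = (Fintype.card F : ℂ) ^ p.natDegree)
    (D : ℂ → Polynomial F → ℂ) (Dres : ℂ → Polynomial F → ℤ → ℂ)
    (E : ℂ → ℂ) (Eres : ℂ → ℤ → ℂ)
    (f : ℕ → ℕ → ℂ → ℂ) (T : ℤ → ℤ → ℂ → ℂ)
    -- T_{ij}(s) depends only on 2i − j mod n
    (hT : ∀ (i j i' j' : ℤ) (s : ℂ), (2 * i - j) % n = (2 * i' - j') % n →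
      T i j s = T i' j' s)
    -- the functional equation of f^{(𝔭,l)}
    (hf : ∀ (j : ℕ) (x : ℂ), x ≠ 0 →
      f l j x = (P * x) ^ ((l : ℤ) - ((l : ℤ) - 2 * j) % n) * f l j (1 / (P ^ 2 * x)))
    -- the Kubota functional equation
    (hD : ∀ m : Polynomial F, m.Monic → ∀ s : ℂ,
      D s m = ((Fintype.card F : ℂ) ^ m.natDegree) ^ ((1 : ℂ) - s) *
        ∑ i ∈ Finset.range n, T i (m.natDegree : ℤ) s * Dres (2 - s) m i)
    (hDres_per : ∀ (s : ℂ) (m : Polynomial F) (i : ℤ), Dres s m i = Dres s m (i % n))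
    -- the decompositions from the previous lemma
    (hE : ∀ s : ℂ, E s =
      ∑ j ∈ Finset.range n,
        D s (p ^ (((l : ℤ) - 2 * j) % n).toNat) * f l j (P ^ (-s)))
    (hEres : ∀ (s : ℂ) (i : ℤ), Eres s i =
      ∑ j ∈ Finset.range n,
        Dres s (p ^ (((l : ℤ) - 2 * j) % n).toNat) (i - j * p.natDegree) * f l j (P ^ (-s)))
    (s : ℂ) :
    E s = P ^ (((1 : ℂ) - s) * l) *
      ∑ i ∈ Finset.range n, T i (l * p.natDegree : ℤ) s * Eres (2 - s) i := by
  have hnpos : 0 < n := hn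
  have hn0 : ((n : ℤ)) ≠ 0 := by exact_mod_cast hnpos.ne'
  set d := p.natDegree with hd
  set Q : ℂ := (Fintype.card F : ℂ) with hQ
  have hQ0 : Q ≠ 0 := Nat.cast_ne_zero.mpr Fintype.card_ne_zero
  have hP0 : P ≠ 0 := by rw [hP]; exact pow_ne_zero _ hQ0
  have hParg : P.arg = 0 := by rw [hP, hQ, ← Nat.cast_pow]; exact Complex.natCast_arg
  have harg : ∀ (m : ℕ) (y : ℂ), (P ^ m) ^ y = P ^ ((m : ℂ) * y) := by
    intro m y
    rw [← Complex.cpow_nat_mul']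
    · rw [hParg, mul_zero]; linarith [Real.pi_pos]
    · rw [hParg, mul_zero]; exact Real.pi_pos.le
  have hW0 : P ^ ((1 : ℂ) - s) ≠ 0 := by
    simp [Complex.cpow_eq_zero_iff, hP0]
  have ht0 : P ^ (-s) ≠ 0 := by simp [Complex.cpow_eq_zero_iff, hP0]
  -- the argument of f on the dual side
  have hu : 1 / (P ^ 2 * P ^ (-s)) = P ^ (-(2 - s)) := by
    rw [show (P ^ 2 : ℂ) = P ^ ((2 : ℕ) : ℂ) from (Complex.cpow_natCast P 2).symm,
      ← Complex.cpow_add _ _ hP0, one_div, ← Complex.cpow_neg]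
    congr 1 <;> push_cast <;> ring_nf
  have hk : ∀ j : ℕ, (((((l : ℤ) - 2 * j) % n).toNat : ℤ)) = ((l : ℤ) - 2 * j) % n :=
    fun j => Int.toNat_of_nonneg (Int.emod_nonneg _ hn0)
  -- the scalar identity
  have key : ∀ j : ℕ,
      ((Q ^ ((p ^ (((l : ℤ) - 2 * j) % n).toNat).natDegree)) ^ ((1 : ℂ) - s)) *
        (P * P ^ (-s)) ^ ((l : ℤ) - ((l : ℤ) - 2 * j) % n)
      = P ^ (((1 : ℂ) - s) * l) := by
    intro j
    set kj : ℕ := (((l : ℤ) - 2 * j) % n).toNat with hkj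
    have hnd : (p ^ kj).natDegree = d * kj := by
      rw [Polynomial.natDegree_pow]; ring
    have h2 : P * P ^ (-s) = P ^ ((1 : ℂ) - s) := by
      nth_rewrite 1 [← Complex.cpow_one P]
      rw [← Complex.cpow_add _ _ hP0]
      congr 1 <;> ring
    rw [hnd, pow_mul, ← hP, h2, harg, Complex.cpow_nat_mul, ← hk j,
      ← zpow_natCast (P ^ ((1 : ℂ) - s)) kj, ← zpow_add₀ hW0,
      show ((kj : ℤ) + ((l : ℤ) - (kj : ℤ))) = (l : ℤ) by ring,
      Complex.cpow_mul_nat, zpow_natCast]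
  -- the sum identity, for each j
  have hsum : ∀ j : ℕ,
      (∑ i ∈ Finset.range n,
          T i (((p ^ (((l : ℤ) - 2 * j) % n).toNat).natDegree : ℕ) : ℤ) s *
            Dres (2 - s) (p ^ (((l : ℤ) - 2 * j) % n).toNat) i)
      = ∑ i ∈ Finset.range n,
          T i ((l : ℤ) * d) s *
            Dres (2 - s) (p ^ (((l : ℤ) - 2 * j) % n).toNat) ((i : ℤ) - (j : ℤ) * d) := by
    intro j
    set kj : ℕ := (((l : ℤ) - 2 * j) % n).toNat with hkj
    set g : ℤ → ℂ := fun x => T x ((kj : ℤ) * d) s * Dres (2 - s) (p ^ kj) x with hg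
    have hper : ∀ x : ℤ, g x = g (x % n) := by
      intro x
      have hx : x % (n : ℤ) % n = x % n := Int.emod_emod_of_dvd x dvd_rfl
      have hTx : T x ((kj : ℤ) * d) s = T (x % n) ((kj : ℤ) * d) s := by
        refine hT _ _ _ _ s ?_
        have hmx : x ≡ x % n [ZMOD (n : ℤ)] := (Int.ModEq.symm hx)
        exact (hmx.mul_left 2).sub (Int.ModEq.refl _)
      simp only [hg]
      rw [hTx, hDres_per]
    have hTij : ∀ i : ℤ, T i ((l : ℤ) * d) s = T (i - (j : ℤ) * d) ((kj : ℤ) * d) s := by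
      intro i
      refine hT _ _ _ _ s ?_
      have h1 : (kj : ℤ) ≡ (l : ℤ) - 2 * j [ZMOD (n : ℤ)] := by
        rw [hkj, hk j]
        exact Int.emod_emod_of_dvd _ dvd_rfl
      have h3 : (l : ℤ) ≡ (kj : ℤ) + 2 * j [ZMOD (n : ℤ)] := by
        have := (h1.symm.add_right (2 * (j : ℤ)))
        simpa using this
      have h5 : (2 * i - (l : ℤ) * d) ≡ 2 * i - ((kj : ℤ) + 2 * j) * d [ZMOD (n : ℤ)] :=
        (Int.ModEq.refl _).sub (h3.mul_right d)
      have h6 : 2 * (i - (j : ℤ) * d) - (kj : ℤ) * d = 2 * i - ((kj : ℤ) + 2 * j) * d := by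
        ring
      rw [h6]
      exact h5
    calc (∑ i ∈ Finset.range n, T i (((p ^ kj).natDegree : ℕ) : ℤ) s * Dres (2 - s) (p ^ kj) i)
        = ∑ i ∈ Finset.range n, g (i : ℤ) := by
          refine Finset.sum_congr rfl fun i _ => ?_
          simp only [hg, Polynomial.natDegree_pow]
          norm_cast
      _ = ∑ i ∈ Finset.range n, g ((i : ℤ) - (j : ℤ) * d) :=
          (shift_sum n hnpos g hper ((j : ℤ) * d)).symm
      _ = ∑ i ∈ Finset.range n,
            T i ((l : ℤ) * d) s * Dres (2 - s) (p ^ kj) ((i : ℤ) - (j : ℤ) * d) := by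
          refine Finset.sum_congr rfl fun i _ => ?_
          simp only [hg]
          rw [hTij]
  -- assemble
  rw [hE s]
  have hR : P ^ (((1 : ℂ) - s) * l) *
        ∑ i ∈ Finset.range n, T i ((l : ℤ) * d) s * Eres (2 - s) i
      = ∑ j ∈ Finset.range n,
          P ^ (((1 : ℂ) - s) * l) *
            (∑ i ∈ Finset.range n,
              T i ((l : ℤ) * d) s *
                Dres (2 - s) (p ^ (((l : ℤ) - 2 * j) % n).toNat) ((i : ℤ) - (j : ℤ) * d)) *
            f l j (P ^ (-(2 - s))) := by
    simp only [hEres, Finset.mul_sum, Finset.sum_mul]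
    rw [Finset.sum_comm]
    exact Finset.sum_congr rfl fun j _ => Finset.sum_congr rfl fun i _ => by ring
  rw [hR]
  refine Finset.sum_congr rfl fun j _ => ?_
  rw [hD _ (hp.pow _) s, hf j _ ht0, hu, ← hsum j, ← key j]
  ring
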